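/- Let G be a connected non-bipartite vertex-transitive simple graph and let X be an independent set of vertices of G. Suppose that the graph G − X (the subgraph induced on V(G) \ X) has exactly |X| − t components consisting of a single vertex, where t is a positive integer. Then the odd girth g₀ of G satisfies g₀ ≥ 2|X|/t + 1. -/

import Mathlib

open SimpleGraph

section Defs

variable {V : Type*}

/-- A simple graph is vertex-transitive if any vertex can be mapped to any other
by a graph automorphism. -/
def VertexTransitive (G : SimpleGraph V) : Prop :=
  ∀ x y : V, ∃ φ : G ≃g G, φ x = y

/-- A graph is `p`-factor-critical if the removal of any set of `p` vertices
results in a graph with a perfect matching. -/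
def PFactorCritical (G : SimpleGraph V) (p : ℕ) : Prop :=
  ∀ X : Set V, X.ncard = p → ∃ M : (G.induce Xᶜ).Subgraph, M.IsPerfectMatching

/-- A graph is factor-critical if the removal of any single vertex results in a
graph with a perfect matching. -/
def IsFactorCritical {W : Type*} (H : SimpleGraph W) : Prop :=
  ∀ v : W, ∃ M : (H.induce ({v}ᶜ : Set W)).Subgraph, M.IsPerfectMatching

/-- `∇(X)`: the set of edges of `G` with exactly one end in `X`. -/
def edgeBoundary (G : SimpleGraph V) (X : Set V) : Set (Sym2 V) :=
  {e | e ∈ G.edgeSet ∧ ∃ x ∈ X, ∃ y ∈ Xᶜ, e = s(x, y)}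

/-- The set of edges of `G` with both ends in `X`. -/
def edgesWithin (G : SimpleGraph V) (X : Set V) : Set (Sym2 V) :=
  {e | e ∈ G.edgeSet ∧ ∀ v ∈ e, v ∈ X}

/-- The set of edges of `G` with one end in `A` and the other end in `S \ A`
(i.e. the edge boundary of `A` inside the induced subgraph `G[S]` when `A ⊆ S`). -/
def inducedEdgeBoundary (G : SimpleGraph V) (S A : Set V) : Set (Sym2 V) :=
  {e | e ∈ G.edgeSet ∧ ∃ x ∈ A, ∃ y ∈ S \ A, e = s(x, y)}

/-- `F` is an `s`-restricted edge-cut of `G` if deleting `F` disconnects `G` and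
every component of `G − F` has at least `s` vertices. -/
def IsRestrictedEdgeCut (G : SimpleGraph V) (s : ℕ) (F : Set (Sym2 V)) : Prop :=
  F ⊆ G.edgeSet ∧ ¬ (G.deleteEdges F).Connected ∧
    ∀ c : (G.deleteEdges F).ConnectedComponent, s ≤ c.supp.ncard

/-- `λ_s(G)`: the minimum cardinality of an `s`-restricted edge-cut of `G`. -/
noncomputable def lambdaS (G : SimpleGraph V) (s : ℕ) : ℕ :=
  sInf (Set.ncard '' {F | IsRestrictedEdgeCut G s F})

/-- A `λ_s`-fragment: a vertex set whose edge boundary is an `s`-restricted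
edge-cut of minimum cardinality `λ_s(G)`. -/
def IsLambdaFragment (G : SimpleGraph V) (s : ℕ) (X : Set V) : Prop :=
  IsRestrictedEdgeCut G s (edgeBoundary G X) ∧ (edgeBoundary G X).ncard = lambdaS G s

/-- A `λ_s`-atom: a `λ_s`-fragment of minimum cardinality. -/
def IsLambdaAtom (G : SimpleGraph V) (s : ℕ) (X : Set V) : Prop :=
  IsLambdaFragment G s X ∧ ∀ Y : Set V, IsLambdaFragment G s Y → X.ncard ≤ Y.ncard

/-- The odd girth of `G`: the length of a shortest odd cycle of `G`. -/
noncomputable def oddGirth (G : SimpleGraph V) : ℕ :=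
  sInf {n | Odd n ∧ ∃ (v : V) (c : G.Walk v v), c.IsCycle ∧ c.length = n}

/-- `X` is an independent set of `G`. -/
def IsIndependentSet (G : SimpleGraph V) (X : Set V) : Prop :=
  ∀ x ∈ X, ∀ y ∈ X, ¬ G.Adj x y

/-- The independence number `α(G)`. -/
noncomputable def indepNum (G : SimpleGraph V) : ℕ :=
  sSup {n | ∃ X : Set V, IsIndependentSet G X ∧ X.ncard = n}

/-- The number of trivial (single-vertex) components of `G − X`. -/
noncomputable def trivialComponentCount (G : SimpleGraph V) (X : Set V) : ℕ :=
  {c : (G.induce Xᶜ).ConnectedComponent | c.supp.ncard = 1}.ncard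

/-- The number of odd components of `G − X`. -/
noncomputable def oddComponentCount (G : SimpleGraph V) (X : Set V) : ℕ :=
  {c : (G.induce Xᶜ).ConnectedComponent | Odd c.supp.ncard}.ncard

/-- The number of nontrivial components of `G − X`. -/
noncomputable def nontrivialComponentCount (G : SimpleGraph V) (X : Set V) : ℕ :=
  {c : (G.induce Xᶜ).ConnectedComponent | 2 ≤ c.supp.ncard}.ncard

/-- An imprimitive block of `G`: a proper non-empty vertex set that every
automorphism either fixes setwise or maps to a disjoint set. -/
def IsImprimitiveBlock (G : SimpleGraph V) (X : Set V) : Prop :=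
  X.Nonempty ∧ X ≠ Set.univ ∧ ∀ φ : G ≃g G, (⇑φ) '' X = X ∨ ((⇑φ) '' X) ∩ X = ∅

/-- A connected graph is `q`-extendable if it has a perfect matching and every
matching of size `q` is contained in a perfect matching. -/
def Extendable (G : SimpleGraph V) (q : ℕ) : Prop :=
  (∃ M : G.Subgraph, M.IsPerfectMatching) ∧
    ∀ M : G.Subgraph, M.IsMatching → M.edgeSet.ncard = q →
      ∃ P : G.Subgraph, P.IsPerfectMatching ∧ M ≤ P

end Defs


section Aux

open SimpleGraph


variable {V : Type*} {G : SimpleGraph V}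

lemma not_mem_dropLast_support {y u : V} (p : G.Walk y u) (hnd : p.support.Nodup) :
    u ∉ p.support.dropLast := by
  induction p with
  | nil => simp
  | @cons a b c h q ih =>
    rw [Walk.support_cons, List.dropLast_cons_of_ne_nil q.support_ne_nil, List.mem_cons]
    rw [Walk.support_cons, List.nodup_cons] at hnd
    rintro (rfl | hm)
    · exact hnd.1 q.end_mem_support
    · exact ih hnd.2 hm

lemma oddcycle_of_closed : ∀ (n : ℕ) {u : V} (W : G.Walk u u), W.length ≤ n → Odd W.length →
    ∃ (x : V) (c : G.Walk x x), c.IsCycle ∧ Odd c.length := by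
  classical
  intro n
  induction n with
  | zero =>
    intro u W hle hodd
    have := hodd.pos
    omega
  | succ n ih =>
    intro u W hle hodd
    by_cases hnd : W.support.tail.Nodup
    · -- W is a cycle
      cases W with
      | nil => simp [Nat.odd_iff] at hodd
      | @cons _ y _ h W₁ =>
        rw [Walk.support_cons, List.tail_cons] at hnd
        have hpath := Walk.IsPath.mk' hnd
        refine ⟨u, Walk.cons h W₁, (Walk.cons_isCycle_iff _ _).2 ⟨hpath, ?_⟩, hodd⟩
        intro he
        rw [Walk.edges, List.mem_map] at he
        obtain ⟨d, hd, hde⟩ := he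
        have hde' : (d.fst = u ∧ d.snd = y) ∨ (d.fst = y ∧ d.snd = u) := by
          rw [Dart.edge] at hde
          exact Sym2.eq_iff.1 hde
        rcases hde' with ⟨h1, h2⟩ | ⟨h1, h2⟩
        · -- dart (u, y) : u in dropLast
          have : u ∈ W₁.support.dropLast := by
            rw [← Walk.map_fst_darts, List.mem_map]
            exact ⟨d, hd, h1⟩
          exact not_mem_dropLast_support W₁ hnd this
        · -- dart (y, u) : must be first dart
          cases W₁ with
          | nil => simp at hd
          | @cons _ z _ h' q =>
            rw [Walk.darts_cons, List.mem_cons] at hd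
            rcases hd with rfl | hd
            · -- z = u from h2
              simp only [] at h2
              subst h2
              have : q.IsPath := Walk.IsPath.mk'
                (by rw [Walk.support_cons] at hnd; exact (List.nodup_cons.1 hnd).2)
              have hq := (Walk.isPath_iff_eq_nil (p := q)).1 this
              subst hq
              simp [Nat.odd_iff] at hodd
            · have : d.fst ∈ q.support := Walk.dart_fst_mem_support_of_mem_darts _ hd
              rw [h1] at this
              rw [Walk.support_cons] at hnd
              exact (List.nodup_cons.1 hnd).1 this
    · -- split
      obtain ⟨x, hx2⟩ : ∃ x, 2 ≤ W.support.tail.count x := by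
        by_contra hno
        push_neg at hno
        exact hnd (List.nodup_iff_count_le_one.2 fun a => by have := hno a; omega)
      have hxs : x ∈ W.support := List.mem_of_mem_tail (List.count_pos_iff.1 (by omega))
      obtain ⟨W'', hlen'', hcnt''⟩ : ∃ W'' : G.Walk x x, W''.length = W.length ∧
          2 ≤ W''.support.tail.count x := by
        refine ⟨W.rotate x hxs, ?_, ?_⟩
        · rw [← Walk.length_darts, ← Walk.length_darts, (W.rotate_darts x hxs).perm.length_eq]
        · rw [(W.support_rotate x hxs).perm.count_eq]; exact hx2
      cases W'' with
      | nil => simp at hcnt''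
      | @cons _ z _ h q =>
        rw [Walk.support_cons, List.tail_cons] at hcnt''
        have hxq : x ∈ q.support := List.count_pos_iff.1 (by omega)
        have hcq : q.support.count x =
            (q.takeUntil x hxq).support.count x + (q.dropUntil x hxq).support.tail.count x := by
          conv_lhs => rw [← q.take_spec hxq]
          rw [Walk.support_append, List.count_append]
        rw [Walk.count_support_takeUntil_eq_one] at hcq
        have hd1 : 1 ≤ (q.dropUntil x hxq).support.tail.count x := by omega
        have hdpos : 1 ≤ (q.dropUntil x hxq).length := by
          have := List.count_pos_iff.1 (by omega : 0 < (q.dropUntil x hxq).support.tail.count x)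
          have h2 := (q.dropUntil x hxq).length_support
          rcases List.length_pos_iff.1 (List.length_pos_of_mem this) with _
          cases hh : (q.dropUntil x hxq).support.tail with
          | nil => rw [hh] at this; simp at this
          | cons a l =>
            have : (q.dropUntil x hxq).support.length = (q.dropUntil x hxq).length + 1 :=
              (q.dropUntil x hxq).length_support
            have h3 : (q.dropUntil x hxq).support.tail.length ≤ (q.dropUntil x hxq).length := by
              rw [List.length_tail, this]; omega
            rw [hh] at h3; simp at h3; omega
        have hq : q.length = (q.takeUntil x hxq).length + (q.dropUntil x hxq).length := by
          conv_lhs => rw [← q.take_spec hxq]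
          rw [Walk.length_append]
        set C₁ := Walk.cons h (q.takeUntil x hxq) with hC₁
        set C₂ := q.dropUntil x hxq with hC₂
        have hsum : C₁.length + C₂.length = q.length + 1 := by
          rw [hC₁, Walk.length_cons]; omega
        have hWlen : (Walk.cons h q).length = q.length + 1 := Walk.length_cons _ _
        rw [hWlen] at hlen''
        rcases Nat.odd_add.1 (by rw [hsum, hlen'']; exact hodd) with hpar
        by_cases hodd1 : Odd C₁.length
        · exact ih C₁ (by omega) hodd1
        · have hodd2 : Odd C₂.length := by
            rcases Nat.even_or_odd C₂.length with he | ho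
            · exact absurd (hpar.2 he) hodd1
            · exact ho
          refine ih C₂ ?_ hodd2
          have hC1pos : 1 ≤ C₁.length := by rw [hC₁, Walk.length_cons]; omega
          omega


variable {V : Type*} {G : SimpleGraph V}

lemma exists_odd_closed_walk (hconn : G.Connected) (hnb : ¬ G.Colorable 2) :
    ∃ (u : V) (W : G.Walk u u), Odd W.length := by
  classical
  have hne : Nonempty V := hconn.nonempty
  obtain ⟨r⟩ := hne
  have hbad : ∃ u w, G.Adj u w ∧ (Even (G.dist r u) ↔ Even (G.dist r w)) := by
    by_contra hno
    push_neg at hno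
    refine hnb ?_
    have c : G.Coloring Bool := Coloring.mk (fun v => decide (Even (G.dist r v))) ?_
    · have := c.colorable
      rwa [Fintype.card_bool] at this
    · intro a b hab
      simp only [ne_eq, decide_eq_decide]
      have := hno a b hab
      tauto
  obtain ⟨u, w, hadj, hpar⟩ := hbad
  obtain ⟨P, hP⟩ := hconn.exists_walk_length_eq_dist r u
  obtain ⟨Q, hQ⟩ := hconn.exists_walk_length_eq_dist r w
  refine ⟨u, (P.reverse.append Q).concat hadj.symm, ?_⟩
  rw [Walk.length_concat, Walk.length_append, Walk.length_reverse, hP, hQ]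
  have : Even (G.dist r u + G.dist r w) := Nat.even_add.2 hpar
  exact this.add_one

lemma zmod_key {L : ℕ} [NeZero L] (hodd : Odd L) (hL3 : 3 ≤ L)
    (A B : Finset (ZMod L))
    (hdisj : ∀ i ∈ B, i ∉ A)
    (hA : ∀ i ∈ A, i + 1 ∉ A)
    (hB1 : ∀ i ∈ B, i + 1 ∈ A) (hB2 : ∀ i ∈ B, i - 1 ∈ A) :
    (L - 1) * B.card ≤ (L - 3) * A.card := by
  classical
  have hinj1 : Function.Injective (fun i : ZMod L => i + 1) := fun a b hab => by
    simpa using hab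
  have hcardA2 : 2 * A.card ≤ L - 1 := by
    have hdisjA : Disjoint A (A.image (· + 1)) := by
      rw [Finset.disjoint_left]
      intro i hi hi'
      obtain ⟨j, hj, hji⟩ := Finset.mem_image.1 hi'
      exact hA j hj (hji ▸ hi)
    have h1 : A.card + (A.image (· + 1)).card ≤ Fintype.card (ZMod L) := by
      rw [← Finset.card_union_of_disjoint hdisjA]
      exact Finset.card_le_univ _
    rw [Finset.card_image_of_injective _ hinj1, ZMod.card] at h1
    have := Nat.odd_iff.1 hodd
    omega
  have hsub1 : B.image (· + 1) ⊆ A := by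
    intro i hi
    obtain ⟨j, hj, hji⟩ := Finset.mem_image.1 hi
    exact hji ▸ hB1 j hj
  have hBA : B.card ≤ A.card := by
    rw [← Finset.card_image_of_injective B hinj1]
    exact Finset.card_le_card hsub1
  rcases B.eq_empty_or_nonempty with rfl | hBne
  · simp
  have hlt : B.card < A.card := by
    rcases lt_or_eq_of_le hBA with h | heq
    · exact h
    exfalso
    -- A = B - 1 (image of (· - 1))
    have hinj2 : Function.Injective (fun i : ZMod L => i - 1) := fun a b hab => by
      simpa using hab
    have hsub2 : B.image (· - 1) ⊆ A := by
      intro i hi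
      obtain ⟨j, hj, hji⟩ := Finset.mem_image.1 hi
      exact hji ▸ hB2 j hj
    have himg2 : B.image (· - 1) = A :=
      Finset.eq_of_subset_of_card_le hsub2
        (by rw [Finset.card_image_of_injective B hinj2, heq])
    have hstep : ∀ x ∈ B, x + 2 ∈ B := by
      intro x hx
      have h1 : x + 1 ∈ A := hB1 x hx
      rw [← himg2, Finset.mem_image] at h1
      obtain ⟨y, hy, hyx⟩ := h1
      have : y = x + 2 := by
        have := hyx
        linear_combination this
      exact this ▸ hy
    obtain ⟨b, hb⟩ := hBne
    have hiter : ∀ k : ℕ, b + 2 * (k : ZMod L) ∈ B := by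
      intro k
      induction k with
      | zero => simpa using hb
      | succ k ihk =>
        have h2 := hstep _ ihk
        have hc : (((k + 1 : ℕ)) : ZMod L) = (k : ZMod L) + 1 := by push_cast; ring
        rw [hc, show b + 2 * ((k : ZMod L) + 1) = b + 2 * (k : ZMod L) + 2 by ring]
        exact h2
    have hcop : Nat.Coprime 2 L := Nat.coprime_two_left.2 hodd
    have hunit : IsUnit (2 : ZMod L) := by
      have := (ZMod.isUnit_iff_coprime 2 L).2 hcop
      simpa using this
    have hall : ∀ y : ZMod L, y ∈ B := by
      intro y
      have hk := hiter ((y - b) * (2 : ZMod L)⁻¹).val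
      rwa [show ((((y - b) * (2:ZMod L)⁻¹).val : ℕ) : ZMod L) = (y - b) * (2:ZMod L)⁻¹ from
        ZMod.natCast_rightInverse _,
        show b + 2 * ((y - b) * (2:ZMod L)⁻¹) = b + (2 * (2:ZMod L)⁻¹) * (y - b) by ring,
        ZMod.mul_inv_of_unit _ hunit, one_mul, add_sub_cancel] at hk
    have h0B : (0 : ZMod L) - 1 ∈ B := hall _
    have h0A : (0 : ZMod L) ∈ A := by
      have := hB1 _ h0B
      rwa [sub_add_cancel] at this
    exact hdisj 0 (hall 0) h0A
  obtain ⟨a, rfl⟩ : ∃ a, L = a + 3 := ⟨L - 3, by omega⟩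
  have h1 : 2 * A.card ≤ a + 2 := by omega
  rw [show a + 3 - 1 = a + 2 from rfl, show a + 3 - 3 = a from rfl]
  zify at h1 hlt ⊢
  have hm : (0:ℤ) ≤ (A.card : ℤ) - B.card - 1 := by omega
  have ha : (0:ℤ) ≤ (a : ℤ) := by positivity
  nlinarith [mul_nonneg ha hm]

lemma trivial_count_eq {V : Type*} (G : SimpleGraph V) (X : Set V) :
    trivialComponentCount G X =
      {v : V | ∃ h : v ∈ Xᶜ, ((G.induce Xᶜ).connectedComponentMk ⟨v, h⟩).supp.ncard = 1}.ncard := by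
  classical
  set T := {v : V | ∃ h : v ∈ Xᶜ, ((G.induce Xᶜ).connectedComponentMk ⟨v, h⟩).supp.ncard = 1}
    with hT
  set S := {c : (G.induce Xᶜ).ConnectedComponent | c.supp.ncard = 1} with hS
  have hout : ∀ c : (G.induce Xᶜ).ConnectedComponent,
      (G.induce Xᶜ).connectedComponentMk (Quot.out c) = c := fun c => Quot.out_eq c
  have himg : T = (fun c : (G.induce Xᶜ).ConnectedComponent => ((Quot.out c : ↥Xᶜ) : V)) '' S := by
    ext v
    constructor
    · rintro ⟨hv, hcard⟩
      refine ⟨(G.induce Xᶜ).connectedComponentMk ⟨v, hv⟩, hcard, ?_⟩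
      obtain ⟨aa, haa⟩ := Set.ncard_eq_one.1 hcard
      have h1 : (⟨v, hv⟩ : ↥Xᶜ) ∈ ((G.induce Xᶜ).connectedComponentMk ⟨v, hv⟩).supp :=
        (ConnectedComponent.mem_supp_iff _ _).2 rfl
      have h2 : Quot.out ((G.induce Xᶜ).connectedComponentMk ⟨v, hv⟩) ∈
          ((G.induce Xᶜ).connectedComponentMk ⟨v, hv⟩).supp :=
        (ConnectedComponent.mem_supp_iff _ _).2 (hout _)
      rw [haa, Set.mem_singleton_iff] at h1 h2
      show ((Quot.out ((G.induce Xᶜ).connectedComponentMk ⟨v, hv⟩) : ↥Xᶜ) : V) = v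
      rw [h2, ← h1]
    · rintro ⟨c, hc, rfl⟩
      have h2 := (ConnectedComponent.mem_supp_iff c (Quot.out c)).2 (hout c)
      refine ⟨(Quot.out c).2, ?_⟩
      have heq : (⟨((Quot.out c : ↥Xᶜ) : V), (Quot.out c).2⟩ : ↥Xᶜ) = Quot.out c :=
        Subtype.ext rfl
      rw [heq, hout c]
      exact hc
  have hinj : Set.InjOn (fun c : (G.induce Xᶜ).ConnectedComponent => ((Quot.out c : ↥Xᶜ) : V)) S := by
    intro c₁ _ c₂ _ hcc
    have heq : (Quot.out c₁ : ↥Xᶜ) = Quot.out c₂ := Subtype.ext hcc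
    rw [← hout c₁, ← hout c₂, heq]
  rw [trivialComponentCount, himg, Set.ncard_image_of_injOn hinj]

end Aux

/-- If `X` is an independent set of a connected non-bipartite
vertex-transitive graph `G` and `G − X` has exactly `|X| − t` trivial components
for a positive integer `t`, then the odd girth of `G` is at least `2|X|/t + 1`. -/
theorem statement4 {V : Type*} [Fintype V] [DecidableEq V]
    (G : SimpleGraph V)
    (hconn : G.Connected) (hvt : VertexTransitive G) (hnb : ¬ G.Colorable 2)
    (X : Set V) (hX : IsIndependentSet G X)
    (t : ℕ) (ht : 0 < t)
    (hcount : trivialComponentCount G X + t = X.ncard) :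
    (2 * X.ncard : ℚ) / (t : ℚ) + 1 ≤ (oddGirth G : ℚ) := by
  classical
  obtain ⟨u₀, W₀, hW₀⟩ := exists_odd_closed_walk hconn hnb
  obtain ⟨v₀, c₀, hc₀, hc₀odd⟩ := oddcycle_of_closed W₀.length W₀ le_rfl hW₀
  set Sg := {n | Odd n ∧ ∃ (v : V) (c : G.Walk v v), c.IsCycle ∧ c.length = n} with hSg
  have hSne : Sg.Nonempty := ⟨c₀.length, hc₀odd, v₀, c₀, hc₀, rfl⟩
  have hmem := Nat.sInf_mem hSne
  set g := sInf Sg with hg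
  have hgirth : oddGirth G = g := rfl
  obtain ⟨hgodd, v, c, hcyc, hclen⟩ := hmem
  have hg3 : 3 ≤ g := hclen ▸ hcyc.three_le_length
  haveI : NeZero g := ⟨by omega⟩
  haveI : Fact (1 < g) := ⟨by omega⟩
  -- the set of trivial-component vertices
  set T := {v : V | ∃ h : v ∈ Xᶜ, ((G.induce Xᶜ).connectedComponentMk ⟨v, h⟩).supp.ncard = 1}
    with hT
  have hTcount : T.ncard + t = X.ncard := by
    rw [← trivial_count_eq G X]; exact hcount
  have hTX : ∀ a ∈ T, ∀ w, G.Adj a w → w ∈ X := by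
    rintro a ⟨ha, hac⟩ w hadj
    by_contra hw
    have hw' : w ∈ Xᶜ := hw
    have hadj' : (G.induce Xᶜ).Adj ⟨a, ha⟩ ⟨w, hw'⟩ := by
      simp only [comap_adj, Function.Embedding.coe_subtype]
      exact hadj
    have hmem1 : (⟨a, ha⟩ : ↥Xᶜ) ∈ ((G.induce Xᶜ).connectedComponentMk ⟨a, ha⟩).supp :=
      (ConnectedComponent.mem_supp_iff _ _).2 rfl
    have hmem2 : (⟨w, hw'⟩ : ↥Xᶜ) ∈ ((G.induce Xᶜ).connectedComponentMk ⟨a, ha⟩).supp :=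
      (ConnectedComponent.mem_supp_iff _ _).2 (ConnectedComponent.sound hadj'.symm.reachable)
    obtain ⟨aa, haa⟩ := Set.ncard_eq_one.1 hac
    rw [haa, Set.mem_singleton_iff] at hmem1 hmem2
    have : a = w := congrArg Subtype.val (hmem1.trans hmem2.symm)
    exact hadj.ne this
  have hTXdisj : ∀ a ∈ T, a ∉ X := by
    rintro a ⟨ha, _⟩
    exact ha
  -- the cycle as a function on ZMod g
  set f : ZMod g → V := fun i => c.getVert i.val with hf
  have hadjf : ∀ i : ZMod g, G.Adj (f i) (f (i + 1)) := by
    intro i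
    have hival : i.val < g := ZMod.val_lt i
    have hone : (1 : ZMod g).val = 1 := ZMod.val_one g
    have hval : (i + 1).val = (i.val + 1) % g := by rw [ZMod.val_add, hone]
    have hadj := c.adj_getVert_succ (by omega : i.val < c.length)
    by_cases hlast : i.val + 1 = g
    · have h0 : (i + 1).val = 0 := by rw [hval, hlast, Nat.mod_self]
      have hv2 : c.getVert (i.val + 1) = c.getVert (i + 1).val := by
        rw [h0, hlast, ← hclen, c.getVert_length, c.getVert_zero]
      show G.Adj (c.getVert i.val) (c.getVert (i + 1).val)
      rw [← hv2]
      exact hadj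
    · have hv2 : (i + 1).val = i.val + 1 := by
        rw [hval]; exact Nat.mod_eq_of_lt (by omega)
      show G.Adj (c.getVert i.val) (c.getVert (i + 1).val)
      rw [hv2]
      exact hadj
  -- automorphism group
  haveI : Finite (G ≃g G) := by
    refine Finite.of_injective (fun φ : G ≃g G => (φ.toEquiv : V ≃ V)) ?_
    intro a b hab
    cases a; cases b
    simpa using hab
  cases nonempty_fintype (G ≃g G)
  have hne : Nonempty V := hconn.nonempty
  obtain ⟨vv⟩ := hne
  set K := (Finset.univ.filter fun φ : G ≃g G => φ vv = vv).card with hK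
  have hfiber : ∀ (a x : V), (Finset.univ.filter fun φ : G ≃g G => φ a = x).card = K := by
    intro a x
    obtain ⟨α, hα⟩ := hvt vv a
    obtain ⟨β, hβ⟩ := hvt x vv
    rw [hK]
    refine Finset.card_bij'
      (fun (φ : G ≃g G) (_ : φ ∈ Finset.univ.filter fun φ : G ≃g G => φ a = x) =>
        (α.trans (φ.trans β) : G ≃g G))
      (fun (ψ : G ≃g G) (_ : ψ ∈ Finset.univ.filter fun ψ : G ≃g G => ψ vv = vv) =>
        (α.symm.trans (ψ.trans β.symm) : G ≃g G)) ?_ ?_ ?_ ?_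
    · intro φ hφ
      simp only [Finset.mem_filter, Finset.mem_univ, true_and] at hφ ⊢
      simp [hα, hφ, hβ]
    · intro ψ hψ
      simp only [Finset.mem_filter, Finset.mem_univ, true_and] at hψ ⊢
      have h1 : α.symm a = vv := by rw [← hα]; exact α.symm_apply_apply vv
      have h2 : β.symm vv = x := by rw [← hβ]; exact β.symm_apply_apply x
      simp [h1, hψ, h2]
    · intro φ _
      ext x'
      simp
    · intro ψ _
      ext x'
      simp
  have hKpos : 0 < K := by
    rw [hK]
    refine Finset.card_pos.2 ⟨RelIso.refl _, ?_⟩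
    simp
  let P : (G ≃g G) → Set V → Finset (ZMod g) := fun φ S =>
    @Finset.filter (ZMod g) (fun i => φ (f i) ∈ S)
      (fun i => Classical.propDecidable _) Finset.univ
  have hmemP : ∀ (φ : G ≃g G) (S : Set V) (i : ZMod g), i ∈ P φ S ↔ φ (f i) ∈ S := by
    intro φ S i
    simp only [P, Finset.mem_filter, Finset.mem_univ, true_and]
  have hsum : ∀ S : Set V,
      ∑ φ : G ≃g G, (P φ S).card
        = g * (S.ncard * K) := by
    intro S
    show ∑ φ : G ≃g G, (@Finset.filter (ZMod g) (fun i => φ (f i) ∈ S)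
      (fun i => Classical.propDecidable _) Finset.univ).card = g * (S.ncard * K)
    have hper : ∀ w : V, (Finset.univ.filter fun φ : G ≃g G => φ w ∈ S).card = S.ncard * K := by
      intro w
      rw [Finset.card_eq_sum_card_fiberwise
        (f := fun φ : G ≃g G => φ w) (t := S.toFinset)
        (fun φ hφ => Set.mem_toFinset.2 (Finset.mem_filter.1 hφ).2)]
      have hstep : ∀ x ∈ S.toFinset,
          ((Finset.univ.filter fun φ : G ≃g G => φ w ∈ S).filter
            fun φ => φ w = x).card = K := by
        intro x hx
        rw [Finset.filter_filter]
        rw [← hfiber w x]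
        congr 1
        apply Finset.filter_congr
        intro φ _
        constructor
        · rintro ⟨_, h⟩; exact h
        · intro h; exact ⟨h ▸ Set.mem_toFinset.1 hx, h⟩
      rw [Finset.sum_congr rfl hstep, Finset.sum_const, smul_eq_mul,
        ← Set.ncard_eq_toFinset_card']
    calc ∑ φ : G ≃g G, (@Finset.filter (ZMod g) (fun i => φ (f i) ∈ S)
      (fun i => Classical.propDecidable _) Finset.univ).card
        = ∑ φ : G ≃g G, ∑ i : ZMod g, (if φ (f i) ∈ S then 1 else 0) := by
          refine Finset.sum_congr rfl fun φ _ => ?_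
          rw [Finset.card_filter]
      _ = ∑ i : ZMod g, ∑ φ : G ≃g G, (if φ (f i) ∈ S then 1 else 0) := Finset.sum_comm
      _ = ∑ i : ZMod g, (Finset.univ.filter fun φ : G ≃g G => φ (f i) ∈ S).card := by
          refine Finset.sum_congr rfl fun i _ => ?_
          rw [Finset.card_filter]
      _ = ∑ _i : ZMod g, S.ncard * K := Finset.sum_congr rfl fun i _ => hper (f i)
      _ = g * (S.ncard * K) := by
          rw [Finset.sum_const, smul_eq_mul, Finset.card_univ, ZMod.card]
  have hkey : ∀ φ : G ≃g G,
      (g - 1) * (P φ T).card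
        ≤ (g - 3) * (P φ X).card := by
    intro φ
    have hadjφ : ∀ i : ZMod g, G.Adj (φ (f i)) (φ (f (i + 1)))  :=
      fun i => φ.map_rel_iff.2 (hadjf i)
    refine zmod_key hgodd hg3 _ _ ?_ ?_ ?_ ?_
    · intro i hi hmem
      rw [hmemP] at hi hmem
      exact hTXdisj _ hi hmem
    · intro i hi hmem
      rw [hmemP] at hi hmem
      exact hX _ hi _ hmem (hadjφ i)
    · intro i hi
      rw [hmemP] at hi ⊢
      exact hTX _ hi _ (hadjφ i)
    · intro i hi
      rw [hmemP] at hi ⊢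
      have := hadjφ (i - 1)
      rw [sub_add_cancel] at this
      exact hTX _ hi _ this.symm
  have hineq : (g - 1) * (g * (T.ncard * K)) ≤ (g - 3) * (g * (X.ncard * K)) := by
    rw [← hsum T, ← hsum X, Finset.mul_sum, Finset.mul_sum]
    exact Finset.sum_le_sum (fun φ (_ : φ ∈ Finset.univ) => hkey φ)
  have hfinal : (g - 1) * T.ncard ≤ (g - 3) * X.ncard := by
    have hgK : 0 < g * K := by
      have : 0 < g := by omega
      exact Nat.mul_pos this hKpos
    refine Nat.le_of_mul_le_mul_right ?_ hgK
    calc (g - 1) * T.ncard * (g * K) = (g - 1) * (g * (T.ncard * K)) := by ring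
      _ ≤ (g - 3) * (g * (X.ncard * K)) := hineq
      _ = (g - 3) * X.ncard * (g * K) := by ring
  have h2X : 2 * X.ncard ≤ (g - 1) * t := by
    obtain ⟨a, hga⟩ : ∃ a, g = a + 3 := ⟨g - 3, by omega⟩
    rw [hga] at hfinal ⊢
    rw [show a + 3 - 1 = a + 2 from rfl] at hfinal ⊢
    rw [show a + 3 - 3 = a from rfl] at hfinal
    nlinarith [hfinal, hTcount]
  rw [hgirth]
  have ht0 : (0 : ℚ) < t := by exact_mod_cast ht
  have hgq : (1 : ℚ) ≤ (g : ℚ) := by exact_mod_cast (by omega : 1 ≤ g)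
  have hcast : (2 * X.ncard : ℚ) ≤ ((g : ℚ) - 1) * t := by
    have := h2X
    have hc : ((g - 1 : ℕ) : ℚ) = (g : ℚ) - 1 := by
      rw [Nat.cast_sub (by omega : 1 ≤ g)]; norm_num
    calc (2 * X.ncard : ℚ) = ((2 * X.ncard : ℕ) : ℚ) := by push_cast; ring
      _ ≤ (((g - 1) * t : ℕ) : ℚ) := by exact_mod_cast this
      _ = ((g : ℚ) - 1) * t := by rw [Nat.cast_mul, hc]
  have hdiv : (2 * X.ncard : ℚ) / t ≤ (g : ℚ) - 1 := by
    rw [div_le_iff₀ ht0]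
    exact hcast
  linarith
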